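/- Let M be a 3-connected matroid with a spike-like 3-separator P: an exactly 3-separating set with a partition {L1, …, Lt}, t ≥ 3, into 2-element sets such that Li ∪ Lj is a quad (both a circuit and a cocircuit) of M for all distinct i, j. Then r(P) = t + 1 and r*(P) = t + 1. -/

import Mathlib

open Set

namespace PaperDefs

variable {α : Type*}

/-- The rank of a set `X` in a matroid `M`, as an extended natural number:
the supremum of the cardinalities of independent subsets of `X`. -/
noncomputable def eRk (M : Matroid α) (X : Set α) : ℕ∞ :=
  ⨆ I ∈ {I | M.Indep I ∧ I ⊆ X}, I.encard

/-- Deletion of a set of elements from a matroid. -/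
def del (M : Matroid α) (D : Set α) : Matroid α := M.restrict (M.E \ D)

/-- Contraction of a set of elements in a matroid. -/
def con (M : Matroid α) (C : Set α) : Matroid α := (del M✶ C)✶

/-- A circuit: a minimal dependent set. -/
def Circuit (M : Matroid α) (C : Set α) : Prop :=
  M.Dep C ∧ ∀ D, D ⊂ C → M.Indep D

/-- A `k`-separation of `M`: a partition `(X, M.E \ X)` with connectivity
`λ(X) = r(X) + r(E−X) − r(M)` at most `k − 1`, and both sides of size at least `k`. -/
def kSeparation (M : Matroid α) (X : Set α) (k : ℕ) : Prop :=
  X ⊆ M.E ∧ eRk M X + eRk M (M.E \ X) ≤ eRk M M.E + ((k - 1 : ℕ) : ℕ∞) ∧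
    (k : ℕ∞) ≤ X.encard ∧ (k : ℕ∞) ≤ (M.E \ X).encard

/-- `M` is `n`-connected if it has no `k`-separations for `0 < k < n`. -/
def NConnected (M : Matroid α) (n : ℕ) : Prop :=
  ∀ k : ℕ, 0 < k → k < n → ∀ X : Set α, ¬ kSeparation M X k

/-- `X` is 3-separating in `M`: `λ_M(X) ≤ 2`. -/
def ThreeSeparating (M : Matroid α) (X : Set α) : Prop :=
  eRk M X + eRk M (M.E \ X) ≤ eRk M M.E + 2

/-- `X` is exactly 3-separating in `M`: `λ_M(X) = 2`. -/
def ExactlyThreeSeparating (M : Matroid α) (X : Set α) : Prop :=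
  eRk M X + eRk M (M.E \ X) = eRk M M.E + 2

/-- `N` is a simplification of `M`: `N` is obtained from `M` by deleting a set of
elements, `N` has no loops or parallel pairs (no circuits of size at most two), and
every element of `M` is in the closure of the ground set of `N`. -/
def IsSimplificationOf (N M : Matroid α) : Prop :=
  (∃ D ⊆ M.E, N = del M D) ∧ (∀ C, Circuit N C → 3 ≤ C.encard) ∧
    M.closure N.E = M.E

/-- `N` is a cosimplification of `M`: `N✶` is a simplification of `M✶`. -/
def IsCosimplificationOf (N M : Matroid α) : Prop :=
  IsSimplificationOf N✶ M✶

/-- `S` is a series class of `M`: a maximal nonempty set any two distinct elements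
of which form a series pair (a two-element cocircuit). -/
def IsSeriesClass (M : Matroid α) (S : Set α) : Prop :=
  S.Nonempty ∧ S ⊆ M.E ∧ (∀ a ∈ S, ∀ b ∈ S, a ≠ b → Circuit M✶ {a, b}) ∧
    (∀ a ∈ S, ∀ f, Circuit M✶ {a, f} → a ≠ f → f ∈ S)

/-- The full closure of `X` in `M`: the intersection of all sets containing `X ∩ M.E`
that are closed in both `M` and `M✶`. -/
def fullClosure (M : Matroid α) (X : Set α) : Set α :=
  ⋂₀ {F | X ∩ M.E ⊆ F ∧ M.closure F = F ∧ M✶.closure F = F}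

end PaperDefs

open PaperDefs

section Aux

variable {α : Type*} {M : Matroid α} {I X Y : Set α}

lemma eRk_eq_encard_of_basis (h : M.IsBasis I X) : eRk M X = I.encard := by
  refine le_antisymm (iSup₂_le fun J hJ => ?_) (le_iSup₂ (f := fun I _ => I.encard) I ⟨h.indep, h.subset⟩)
  obtain ⟨J', hJ', hJJ'⟩ := hJ.1.subset_isBasis_of_subset hJ.2 h.subset_ground
  exact (Set.encard_mono hJJ').trans_eq (hJ'.encard_eq_encard h)

lemma eRk_le_encard (M : Matroid α) (X : Set α) : eRk M X ≤ X.encard :=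
  iSup₂_le fun J hJ => Set.encard_mono hJ.2

lemma eRk_mono (M : Matroid α) (hXY : X ⊆ Y) : eRk M X ≤ eRk M Y :=
  iSup₂_le fun J hJ => le_iSup₂ (f := fun I _ => I.encard) J ⟨hJ.1, hJ.2.trans hXY⟩

lemma eRk_closure (hX : X ⊆ M.E) : eRk M (M.closure X) = eRk M X := by
  obtain ⟨I, hI⟩ := M.exists_isBasis X hX
  rw [eRk_eq_encard_of_basis hI.isBasis_closure_right, eRk_eq_encard_of_basis hI]

/-- The dual rank formula, in additive (subtraction-free) form. -/
lemma eRk_dual_add (hX : X ⊆ M.E) :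
    eRk M✶ X + eRk M M.E = X.encard + eRk M (M.E \ X) := by
  obtain ⟨I, hI⟩ := M.exists_isBasis (M.E \ X) diff_subset
  obtain ⟨B, hB, hIB⟩ := hI.indep.exists_isBase_superset
  have hBI : I = B ∩ (M.E \ X) :=
    hI.eq_of_subset_indep (hB.indep.inter_right _)
      (subset_inter hIB hI.subset) inter_subset_right
  have hI2 : M.IsBasis (B ∩ (M.E \ X)) (M.E \ X) := hBI ▸ hI
  have hdual := (hB.inter_isBasis_iff_compl_inter_isBasis_dual diff_subset).mp hI2
  rw [diff_diff_cancel_left hX] at hdual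
  have h1 : eRk M✶ X = (X \ B).encard := by
    rw [eRk_eq_encard_of_basis hdual]
    congr 1
    ext z
    simp only [mem_inter_iff, mem_diff]
    exact ⟨fun h => ⟨h.2, h.1.2⟩, fun h => ⟨⟨hX h.1, h.2⟩, h.1⟩⟩
  have h2 : eRk M M.E = B.encard := eRk_eq_encard_of_basis hB.isBasis_ground
  have h3 : eRk M (M.E \ X) = (B \ X).encard := by
    rw [eRk_eq_encard_of_basis hI2]
    congr 1
    ext z
    simp only [mem_inter_iff, mem_diff]
    exact ⟨fun h => ⟨h.1, h.2.2⟩, fun h => ⟨h.1, hB.subset_ground h.1, h.2⟩⟩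
  rw [h1, h2, h3, ← Set.encard_diff_add_encard_inter B X,
    ← Set.encard_diff_add_encard_inter X B, inter_comm X B]
  ring

/-- Upper bound on the rank of a spike-like separator from the leg circuits. -/
lemma eRk_le_of_leg_circuits {P : Set α} {t : ℕ} {L : Fin t → Set α}
    (ht : 0 < t) (hPE : P ⊆ M.E)
    (hcover : (⋃ i, L i) = P)
    (hcard : ∀ i, (L i).encard = 2)
    (hcirc : ∀ i j : Fin t, i ≠ j → Circuit M (L i ∪ L j)) :
    eRk M P ≤ t + 1 := by
  classical
  have hLP : ∀ i, L i ⊆ P := fun i => hcover ▸ subset_iUnion L i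
  choose x y hxy hL using fun i => Set.encard_eq_two.mp (hcard i)
  set i0 : Fin t := ⟨0, ht⟩
  set B : Set α := insert (y i0) (Set.range x) with hB
  have hxB : ∀ i, x i ∈ B := fun i => Or.inr ⟨i, rfl⟩
  have hBP : B ⊆ P := by
    rintro z (rfl | ⟨i, rfl⟩)
    · exact hLP i0 (by rw [hL i0]; exact Or.inr rfl)
    · exact hLP i (by rw [hL i]; exact Or.inl rfl)
  have hBE : B ⊆ M.E := hBP.trans hPE
  have hPcl : P ⊆ M.closure B := by
    intro z hz
    rw [← hcover] at hz
    obtain ⟨i, hzi⟩ := mem_iUnion.mp hz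
    rw [hL i] at hzi
    rcases hzi with rfl | rfl
    · exact M.subset_closure B hBE (hxB i)
    · rcases eq_or_ne i i0 with rfl | hne
      · exact M.subset_closure B hBE (Or.inl rfl)
      have hC := hcirc i0 i (fun h => hne h.symm)
      have hyC : y i ∈ L i0 ∪ L i := Or.inr (by rw [hL i]; exact Or.inr rfl)
      have hssub : (L i0 ∪ L i) \ {y i} ⊂ L i0 ∪ L i :=
        Set.sdiff_singleton_ssubset.mpr hyC
      have hind := hC.2 _ hssub
      have hmem : y i ∈ M.closure ((L i0 ∪ L i) \ {y i}) := by
        rw [hind.mem_closure_iff]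
        left
        rw [insert_diff_singleton, insert_eq_of_mem hyC]
        exact hC.1
      refine M.closure_subset_closure ?_ hmem
      intro w hw
      obtain ⟨hw1, hw2⟩ := hw
      have hwy : w ≠ y i := by simpa using hw2
      rcases hw1 with hw1 | hw1
      · rw [hL i0] at hw1
        rcases hw1 with rfl | rfl
        · exact hxB i0
        · exact Or.inl rfl
      · rw [hL i] at hw1
        rcases hw1 with rfl | rfl
        · exact hxB i
        · exact absurd rfl hwy
  have hcount : B.encard ≤ (t : ℕ∞) + 1 := by
    refine (Set.encard_insert_le _ _).trans (add_le_add_left ?_ 1)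
    have hr : Set.range x = ↑(Finset.univ.image x) := by
      simp [Finset.coe_image]
    rw [hr, Set.encard_coe_eq_coe_finsetCard]
    exact_mod_cast Finset.card_image_le.trans (le_of_eq (by simp))
  calc eRk M P ≤ eRk M (M.closure B) := eRk_mono M hPcl
    _ = eRk M B := eRk_closure hBE
    _ ≤ B.encard := eRk_le_encard M B
    _ ≤ (t : ℕ∞) + 1 := hcount

lemma encard_biUnion_legs {t : ℕ} {L : Fin t → Set α}
    (hdisj : ∀ i j : Fin t, i ≠ j → Disjoint (L i) (L j))
    (hcard : ∀ i, (L i).encard = 2) :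
    (⋃ i, L i).encard = 2 * t := by
  classical
  have key : ∀ s : Finset (Fin t), (⋃ i ∈ s, L i).encard = 2 * s.card := by
    intro s
    induction s using Finset.induction with
    | empty => simp
    | @insert a s ha ih =>
      have hd : Disjoint (L a) (⋃ i ∈ s, L i) := by
        rw [Set.disjoint_iUnion₂_right]
        intro i hi
        exact hdisj a i (fun h => ha (h ▸ hi))
      rw [Finset.set_biUnion_insert, Set.encard_union_eq hd, ih, hcard a,
        Finset.card_insert_of_notMem ha]
      push_cast
      ring
  have := key Finset.univ
  simpa using this

end Aux

/-- If `P` is a spike-like 3-separator of a 3-connected matroid `M`,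
with partition `{L 0, …, L (t-1)}` into `t ≥ 3` two-element legs whose pairwise
unions are quads, then `r(P) = t + 1` and `r*(P) = t + 1`. -/
theorem statement_18 {α : Type*} (M : Matroid α) (P : Set α) (t : ℕ)
    (L : Fin t → Set α) (h3 : NConnected M 3) (ht : 3 ≤ t)
    (hPE : P ⊆ M.E) (hexact : ExactlyThreeSeparating M P)
    (hdisj : ∀ i j : Fin t, i ≠ j → Disjoint (L i) (L j))
    (hcover : (⋃ i, L i) = P)
    (hcard : ∀ i, (L i).encard = 2)
    (hquad : ∀ i j : Fin t, i ≠ j →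
      Circuit M (L i ∪ L j) ∧ Circuit M✶ (L i ∪ L j)) :
    eRk M P = t + 1 ∧ eRk M✶ P = t + 1 := by
  have ht0 : 0 < t := by omega
  have hPcard : P.encard = 2 * t := hcover ▸ encard_biUnion_legs hdisj hcard
  have hPfin : P.encard ≠ ⊤ := by
    rw [hPcard, show (2 * (t : ℕ∞)) = ((2 * t : ℕ) : ℕ∞) by push_cast; ring]
    exact ENat.coe_ne_top _
  -- Upper bounds from the circuits and cocircuits.
  have hub1 : eRk M P ≤ (t : ℕ∞) + 1 :=
    eRk_le_of_leg_circuits ht0 hPE hcover hcard (fun i j h => (hquad i j h).1)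
  have hub2 : eRk M✶ P ≤ (t : ℕ∞) + 1 :=
    eRk_le_of_leg_circuits (M := M✶) ht0 hPE hcover hcard (fun i j h => (hquad i j h).2)
  -- The rank of M is finite, else P would give a 2-separation.
  have hEfin : eRk M M.E ≠ ⊤ := by
    intro htop
    refine h3 2 (by norm_num) (by norm_num) P ⟨hPE, ?_, ?_, ?_⟩
    · rw [htop]; exact le_top.trans (by simp)
    · have h2P : (2 : ℕ∞) ≤ P.encard := by
        rw [hPcard]
        calc (2 : ℕ∞) = 2 * 1 := by norm_num
          _ ≤ 2 * t := by
            have : (1 : ℕ∞) ≤ t := by exact_mod_cast ht0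
            exact mul_le_mul_right this 2
      exact h2P
    · have hEtop : M.E.encard = ⊤ :=
        top_le_iff.mp (htop ▸ eRk_le_encard M M.E)
      have hdiff : (M.E \ P).encard = ⊤ := by
        by_contra hne
        have := Set.encard_diff_add_encard_of_subset hPE
        rw [hEtop] at this
        exact (WithTop.add_ne_top.mpr ⟨hne, hPfin⟩) this
      rw [hdiff]; exact le_top
  -- The connectivity identity.
  have hdualf : eRk M✶ P + eRk M M.E = P.encard + eRk M (M.E \ P) := eRk_dual_add hPE
  have hex : eRk M P + eRk M (M.E \ P) = eRk M M.E + 2 := hexact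
  have hsum : eRk M P + eRk M✶ P = 2 * t + 2 := by
    have hkey : (eRk M P + eRk M✶ P) + eRk M M.E = (2 * t + 2) + eRk M M.E := by
      calc (eRk M P + eRk M✶ P) + eRk M M.E
          = eRk M P + (eRk M✶ P + eRk M M.E) := by ring
        _ = eRk M P + (P.encard + eRk M (M.E \ P)) := by rw [hdualf]
        _ = P.encard + (eRk M P + eRk M (M.E \ P)) := by ring
        _ = P.encard + (eRk M M.E + 2) := by rw [hex]
        _ = (2 * t + 2) + eRk M M.E := by rw [hPcard]; ring
    exact WithTop.add_right_cancel hEfin hkey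
  -- Conclude by a pigeonhole argument.
  have hne : ((t : ℕ∞) + 1) ≠ ⊤ := by
    rw [show ((t : ℕ∞) + 1) = ((t + 1 : ℕ) : ℕ∞) by push_cast; ring]
    exact ENat.coe_ne_top _
  have hsplit : (2 * (t : ℕ∞) + 2) = ((t : ℕ∞) + 1) + ((t : ℕ∞) + 1) := by ring
  constructor
  · refine le_antisymm hub1 ?_
    have : ((t : ℕ∞) + 1) + ((t : ℕ∞) + 1) ≤ eRk M P + ((t : ℕ∞) + 1) := by
      rw [← hsplit, ← hsum]
      exact add_le_add_right hub2 _
    exact (WithTop.add_le_add_iff_right hne).mp this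
  · refine le_antisymm hub2 ?_
    have : ((t : ℕ∞) + 1) + ((t : ℕ∞) + 1) ≤ eRk M✶ P + ((t : ℕ∞) + 1) := by
      rw [← hsplit, ← hsum, add_comm (eRk M P)]
      exact add_le_add_right hub1 _
    exact (WithTop.add_le_add_iff_right hne).mp this
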